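/- arXiv:2111.06490 — 4 statements merged into one kernel-verified Lean document; each statement's English description precedes it below -/
import Mathlib

section
/- Let Y be an n×n real positive semidefinite matrix, F₀ a real symmetric n×n matrix, and D a diagonal matrix with entries ±1 such that D F₀ D is a Z-matrix (all off-diagonal entries of D F₀ D are nonpositive). Define y ∈ ℝⁿ by y_j = D_{jj} sqrt(Y_{jj}). Then yᵀ F₀ y ≤ trace(F₀ Y). -/
open Matrix

lemma sum_pair {n : ℕ} {i j : Fin n} (hij : i ≠ j) (f : Fin n → ℝ)
    (h0 : ∀ k, k ≠ i → k ≠ j → f k = 0) : ∑ k, f k = f i + f j := by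
  rw [← Finset.add_sum_erase _ _ (Finset.mem_univ i),
      ← Finset.add_sum_erase _ _ (Finset.mem_erase.2 ⟨Ne.symm hij, Finset.mem_univ j⟩)]
  rw [Finset.sum_eq_zero, add_zero]
  intro k hk
  simp only [Finset.mem_erase] at hk
  exact h0 k hk.2.1 hk.1

lemma psd_cs {n : ℕ} {Y : Matrix (Fin n) (Fin n) ℝ} (hY : Y.PosSemidef)
    (i j : Fin n) : Y i j ^ 2 ≤ Y i i * Y j j := by
  rcases eq_or_ne i j with rfl | hij
  · rw [sq]
  have hYji : Y j i = Y i j := by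
    have := congrFun (congrFun hY.1.symm j) i; simpa using this
  have key : ∀ t : ℝ, 0 ≤ Y i i * (t * t) + (2 * Y i j) * t + Y j j := by
    intro t
    set v : Fin n → ℝ := fun k => if k = i then t else if k = j then 1 else 0 with hv
    have hmv : ∀ k, (Y *ᵥ v) k = Y k i * t + Y k j := by
      intro k
      simp only [mulVec, dotProduct]
      rw [sum_pair hij]
      · simp [hv, hij, Ne.symm hij]
      · intro l hl1 hl2; simp [hv, hl1, hl2]
    have h2 := hY.dotProduct_mulVec_nonneg v
    simp only [RCLike.re_to_real, dotProduct] at h2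
    rw [sum_pair hij] at h2
    · rw [hmv, hmv] at h2
      simp only [hv, star_apply, if_pos rfl, if_neg hij, if_neg (Ne.symm hij), if_pos rfl,
        star_trivial, if_true] at h2
      rw [hYji] at h2; nlinarith [h2]
    · intro l hl1 hl2
      simp [hv, hl1, hl2]
  have h := discrim_le_zero key
  rw [discrim] at h
  nlinarith [h]

lemma psd_diag {n : ℕ} {Y : Matrix (Fin n) (Fin n) ℝ} (hY : Y.PosSemidef)
    (i : Fin n) : 0 ≤ Y i i := by
  have h := hY.dotProduct_mulVec_nonneg (fun k => if k = i then (1:ℝ) else 0)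
  simp only [RCLike.re_to_real, dotProduct, mulVec] at h
  rw [Finset.sum_eq_single i (fun l _ hl => by simp [hl]) (by simp),
    Finset.sum_eq_single i (fun l _ hl => by simp [hl]) (by simp)] at h
  simpa using h

theorem stmt5 (n : ℕ) (Y F0 : Matrix (Fin n) (Fin n) ℝ)
    (hY : Y.PosSemidef) (hF0 : F0.IsSymm)
    (d : Fin n → ℝ) (hd : ∀ j, d j = 1 ∨ d j = -1)
    (hZ : ∀ i j, i ≠ j → (Matrix.diagonal d * F0 * Matrix.diagonal d) i j ≤ 0)
    (y : Fin n → ℝ) (hy : ∀ j, y j = d j * Real.sqrt (Y j j)) :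
    y ⬝ᵥ F0 *ᵥ y ≤ Matrix.trace (F0 * Y) := by
  rw [trace, dotProduct]
  simp only [diag_apply, mul_apply, mulVec, dotProduct, Finset.mul_sum]
  refine Finset.sum_le_sum fun i _ => Finset.sum_le_sum fun j _ => ?_
  rcases eq_or_ne i j with rfl | hij
  · rw [hy i]
    have h1 : Real.sqrt (Y i i) * Real.sqrt (Y i i) = Y i i :=
      Real.mul_self_sqrt (psd_diag hY i)
    rcases hd i with hi | hi <;> rw [hi] <;> apply le_of_eq <;> linear_combination (F0 i i) * h1
  · have hg := hZ i j hij
    have hg' : d i * F0 i j * d j ≤ 0 := by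
      rwa [Matrix.mul_diagonal, Matrix.diagonal_mul] at hg
    have habs : |Y j i| ≤ Real.sqrt (Y j j) * Real.sqrt (Y i i) := by
      rw [← Real.sqrt_sq_eq_abs, ← Real.sqrt_mul (psd_diag hY j)]
      exact Real.sqrt_le_sqrt (by nlinarith [psd_cs hY j i])
    have h2 := abs_le.mp habs
    have s1 := Real.sqrt_nonneg (Y i i)
    have s2 := Real.sqrt_nonneg (Y j j)
    rw [hy i, hy j]
    rcases hd i with hi | hi <;> rcases hd j with hj | hj <;>
      rw [hi, hj] at hg' ⊢ <;> nlinarith [h2.1, h2.2, hg']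
end

section
/- Let F₀, F₁,...,F_N be real symmetric (p+1)×(p+1) matrices with each F_i (i ≥ 1) diagonal, and suppose there exists Y ⪰ 0 with trace(F₀ Y) < 0 and trace(F_i Y) = ψ_i for all i. If there exists a ±1 diagonal matrix D such that D F₀ D is a Z-matrix, then there exists a vector y ∈ ℝ^{p+1} with yᵀ F₀ y < 0 and yᵀ F_i y = ψ_i for all i. -/
open Matrix

theorem stmt6 (p N : ℕ)
    (F0 : Matrix (Fin (p+1)) (Fin (p+1)) ℝ) (hF0 : F0.IsSymm)
    (F : Fin N → Matrix (Fin (p+1)) (Fin (p+1)) ℝ) (hF : ∀ i, (F i).IsDiag)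
    (ψ : Fin N → ℝ)
    (Y : Matrix (Fin (p+1)) (Fin (p+1)) ℝ) (hY : Y.PosSemidef)
    (htr0 : Matrix.trace (F0 * Y) < 0)
    (htri : ∀ i, Matrix.trace (F i * Y) = ψ i)
    (d : Fin (p+1) → ℝ) (hd : ∀ j, d j = 1 ∨ d j = -1)
    (hZ : ∀ i j, i ≠ j → (Matrix.diagonal d * F0 * Matrix.diagonal d) i j ≤ 0) :
    ∃ y : Fin (p+1) → ℝ, y ⬝ᵥ F0 *ᵥ y < 0 ∧ ∀ i, y ⬝ᵥ (F i) *ᵥ y = ψ i := by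
  have hsymm : ∀ j k, Y j k = Y k j := by
    intro j k
    simpa using hY.1.apply k j
  -- diagonal entries nonneg
  have hdiag : ∀ j, 0 ≤ Y j j := by
    intro j
    have := hY.dotProduct_mulVec_nonneg (Pi.single j 1)
    simpa [dotProduct, Matrix.mulVec, Pi.single_apply, Finset.sum_ite_eq,
      Finset.sum_ite_eq'] using this
  -- 2x2 minor inequality
  have hsq : ∀ j k, Y k j * Y k j ≤ Y j j * Y k k := by
    intro j k
    rcases eq_or_ne j k with rfl | hjk
    · exact le_rfl
    · have hq : ∀ t : ℝ, 0 ≤ Y k k * (t * t) + (2 * Y k j) * t + Y j j := by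
        intro t
        have := hY.dotProduct_mulVec_nonneg (fun i => (if i = j then (1:ℝ) else 0) + (if i = k then t else 0))
        have h2 : star (fun i => (if i = j then (1:ℝ) else 0) + (if i = k then t else 0))
            ⬝ᵥ Y *ᵥ (fun i => (if i = j then (1:ℝ) else 0) + (if i = k then t else 0))
            = Y k k * (t * t) + (2 * Y k j) * t + Y j j := by
          simp [dotProduct, Matrix.mulVec, mul_add, add_mul, Finset.sum_add_distrib,
            mul_ite, ite_mul, mul_zero, zero_mul, mul_one, one_mul, Finset.sum_ite_eq,
            Finset.sum_ite_eq', hjk, hjk.symm, hsymm j k]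
          ring
        rw [h2] at this
        exact this
      have := discrim_le_zero hq
      rw [discrim] at this
      nlinarith
  set y : Fin (p+1) → ℝ := fun j => d j * Real.sqrt (Y j j) with hy
  have hd2 : ∀ j, d j * d j = 1 := by
    intro j; rcases hd j with h | h <;> rw [h] <;> norm_num
  have hysq : ∀ j, y j * y j = Y j j := by
    intro j
    have : Real.sqrt (Y j j) * Real.sqrt (Y j j) = Y j j :=
      Real.mul_self_sqrt (hdiag j)
    calc y j * y j = (d j * d j) * (Real.sqrt (Y j j) * Real.sqrt (Y j j)) := by ring
    _ = Y j j := by rw [hd2 j, this, one_mul]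
  refine ⟨y, ?_, ?_⟩
  · -- key pointwise bound
    have key : ∀ j k, y j * (F0 j k * y k) ≤ F0 j k * Y k j := by
      intro j k
      rcases eq_or_ne j k with rfl | hjk
      · refine le_of_eq ?_
        rw [← hysq j]; ring
      · have ha : d j * F0 j k * d k ≤ 0 := by
          have := hZ j k hjk
          simpa [Matrix.diagonal_mul, Matrix.mul_diagonal, mul_comm, mul_assoc, mul_left_comm]
            using this
        have hb : d j * d k * Y k j ≤ Real.sqrt (Y j j) * Real.sqrt (Y k k) := by
          have h1 : d j * d k * Y k j ≤ |Y k j| := by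
            rcases hd j with h | h <;> rcases hd k with h' | h' <;> simp [h, h'] <;>
              first | exact le_abs_self _ | exact neg_le_abs _
          have h2 : |Y k j| ≤ Real.sqrt (Y j j) * Real.sqrt (Y k k) := by
            rw [← Real.sqrt_mul_self (abs_nonneg (Y k j)), ← Real.sqrt_mul (hdiag j)]
            apply Real.sqrt_le_sqrt
            rw [abs_mul_abs_self]
            exact hsq j k
          linarith
        have hF0eq : F0 j k = (d j * F0 j k * d k) * (d j * d k) := by
          have hj := hd2 j; have hk := hd2 k
          calc F0 j k = F0 j k * ((d j * d j) * (d k * d k)) := by rw [hj, hk]; ring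
          _ = (d j * F0 j k * d k) * (d j * d k) := by ring
        calc y j * (F0 j k * y k)
            = (d j * F0 j k * d k) * (Real.sqrt (Y j j) * Real.sqrt (Y k k)) := by
              rw [hy]; ring
          _ ≤ (d j * F0 j k * d k) * (d j * d k * Y k j) :=
              mul_le_mul_of_nonpos_left hb ha
          _ = F0 j k * Y k j := by
              conv_rhs => rw [hF0eq]
              ring
    have hexp : y ⬝ᵥ F0 *ᵥ y = ∑ j, ∑ k, y j * (F0 j k * y k) := by
      simp [dotProduct, Matrix.mulVec, Finset.mul_sum]
    have htr : Matrix.trace (F0 * Y) = ∑ j, ∑ k, F0 j k * Y k j := by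
      simp [Matrix.trace, Matrix.mul_apply, Matrix.diag]
    calc y ⬝ᵥ F0 *ᵥ y = ∑ j, ∑ k, y j * (F0 j k * y k) := hexp
      _ ≤ ∑ j, ∑ k, F0 j k * Y k j :=
          Finset.sum_le_sum fun j _ => Finset.sum_le_sum fun k _ => key j k
      _ = Matrix.trace (F0 * Y) := htr.symm
      _ < 0 := htr0
  · intro i
    have hFd : ∀ j k, j ≠ k → F i j k = 0 := fun j k h => hF i h
    have hexp : y ⬝ᵥ F i *ᵥ y = ∑ j, F i j j * Y j j := by
      simp only [dotProduct, Matrix.mulVec]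
      apply Finset.sum_congr rfl
      intro j _
      rw [Finset.sum_eq_single j]
      · rw [← hysq j]; ring
      · intro k _ hk; rw [hFd j k (Ne.symm hk)]; ring
      · intro h; exact absurd (Finset.mem_univ j) h
    have htr : Matrix.trace (F i * Y) = ∑ j, F i j j * Y j j := by
      rw [Matrix.trace]
      apply Finset.sum_congr rfl
      intro j _
      rw [Matrix.diag, Matrix.mul_apply, Finset.sum_eq_single j]
      · intro k _ hk; rw [hFd j k (Ne.symm hk)]; ring
      · intro h; exact absurd (Finset.mem_univ j) h
    rw [hexp, ← htr, htri i]
end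

section
/- Let h(x) = xᵀAx + 2bᵀx + c be a quadratic function on ℝᵖ with A symmetric. Then h(x) ≥ 0 for all x ∈ ℝᵖ if and only if the extended (p+1)×(p+1) matrix [[A, b],[bᵀ, c]] is positive semidefinite. -/
open Matrix

lemma quadform (p : ℕ) (A : Matrix (Fin p) (Fin p) ℝ) (b : Fin p → ℝ) (c : ℝ)
    (x : Fin p → ℝ) (t : ℝ) :
    (Sum.elim x (fun _ : Unit => t)) ⬝ᵥ
      (Matrix.fromBlocks A (Matrix.replicateCol Unit b) (Matrix.replicateRow Unit b)
        (Matrix.of fun _ _ => c)) *ᵥ (Sum.elim x (fun _ => t)) =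
    x ⬝ᵥ A *ᵥ x + 2 * t * (b ⬝ᵥ x) + c * t^2 := by
  rw [fromBlocks_mulVec, sumElim_dotProduct_sumElim]
  simp only [mulVec, dotProduct, Pi.add_apply, of_apply, replicateCol_apply, replicateRow_apply,
    Finset.univ_unique, Finset.sum_const, Finset.card_singleton, one_smul,
    Sum.elim_comp_inl, Sum.elim_comp_inr, Finset.sum_singleton]
  have h1 : ∑ i, x i * (b i * t) = t * ∑ i, b i * x i := by
    rw [Finset.mul_sum]; exact Finset.sum_congr rfl fun i _ => by ring
  simp only [mul_add, Finset.sum_add_distrib, h1]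
  ring

lemma scalar_aux (q l c : ℝ) (h : ∀ s : ℝ, q * s^2 + 2 * l * s + c ≥ 0) : 0 ≤ q := by
  by_contra hq
  push_neg at hq
  have hq' : 0 < -q := by linarith
  set s := max 1 ((2*|l| + |c| + 1)/(-q)) with hs_def
  have hs1 : (1:ℝ) ≤ s := le_max_left _ _
  have hs0 : 0 < s := by linarith
  have hs2 : 2*|l| + |c| + 1 ≤ s * (-q) := by
    rw [← div_le_iff₀ hq']
    exact le_max_right _ _
  have e1 : s * (2*|l| + |c| + 1) ≤ s * (s * (-q)) :=
    mul_le_mul_of_nonneg_left hs2 hs0.le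
  have hs := h s
  nlinarith [le_abs_self l, neg_abs_le l, le_abs_self c, abs_nonneg c, abs_nonneg l]

theorem stmt9 (p : ℕ) (A : Matrix (Fin p) (Fin p) ℝ) (b : Fin p → ℝ) (c : ℝ)
    (hA : A.IsSymm) :
    (∀ x : Fin p → ℝ, x ⬝ᵥ A *ᵥ x + 2 * (b ⬝ᵥ x) + c ≥ 0) ↔
      (Matrix.fromBlocks A (Matrix.replicateCol Unit b) (Matrix.replicateRow Unit b)
        (Matrix.of fun _ _ => c)).PosSemidef := by
  constructor
  · intro h
    refine posSemidef_iff_dotProduct_mulVec.mpr ⟨?_, ?_⟩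
    · show _ = _
      rw [conjTranspose_eq_transpose_of_trivial, fromBlocks_transpose, transpose_replicateCol,
        transpose_replicateRow, hA.eq]
      congr 1
    · intro z
      have hz : z = Sum.elim (z ∘ Sum.inl) (fun _ : Unit => z (Sum.inr ())) := by
        funext i; rcases i with i | ⟨⟩ <;> rfl
      set x := z ∘ Sum.inl
      set t := z (Sum.inr ())
      have key : star z ⬝ᵥ (Matrix.fromBlocks A (Matrix.replicateCol Unit b) (Matrix.replicateRow Unit b)
          (Matrix.of fun _ _ => c)) *ᵥ z =
          x ⬝ᵥ A *ᵥ x + 2 * t * (b ⬝ᵥ x) + c * t^2 := by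
        rw [show star z = z from rfl, hz, quadform]
      rw [key]
      rcases eq_or_ne t 0 with ht | ht
      · rw [ht]
        simp only [mul_zero, zero_mul, add_zero, pow_two, mul_zero]
        have : ∀ s : ℝ, (x ⬝ᵥ A *ᵥ x) * s^2 + 2 * (b ⬝ᵥ x) * s + c ≥ 0 := by
          intro s
          have hq := h (s • x)
          have e1 : (s • x) ⬝ᵥ A *ᵥ (s • x) = s * (s * (x ⬝ᵥ A *ᵥ x)) := by
            rw [mulVec_smul, dotProduct_smul, smul_dotProduct]; simp [smul_eq_mul]
          have e2 : b ⬝ᵥ (s • x) = s * (b ⬝ᵥ x) := by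
            rw [dotProduct_smul]; simp [smul_eq_mul]
          rw [e1, e2] at hq
          nlinarith [hq]
        have := scalar_aux _ _ _ this
        linarith [this]
      · have hq := h (t⁻¹ • x)
        have e1 : (t⁻¹ • x) ⬝ᵥ A *ᵥ (t⁻¹ • x) = t⁻¹ * (t⁻¹ * (x ⬝ᵥ A *ᵥ x)) := by
          rw [mulVec_smul, dotProduct_smul, smul_dotProduct]; simp [smul_eq_mul]
        have e2 : b ⬝ᵥ (t⁻¹ • x) = t⁻¹ * (b ⬝ᵥ x) := by
          rw [dotProduct_smul]; simp [smul_eq_mul]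
        rw [e1, e2] at hq
        have ht2 : (0:ℝ) < t^2 := by positivity
        have := mul_le_mul_of_nonneg_left hq ht2.le
        have eq3 : t^2 * (t⁻¹ * (t⁻¹ * (x ⬝ᵥ A *ᵥ x)) + 2 * (t⁻¹ * (b ⬝ᵥ x)) + c)
            = x ⬝ᵥ A *ᵥ x + 2 * t * (b ⬝ᵥ x) + c * t^2 := by
          field_simp
        rw [mul_zero, eq3] at this
        linarith
  · intro h x
    have := h.dotProduct_mulVec_nonneg (Sum.elim x (fun _ : Unit => 1))
    rw [show star (Sum.elim x (fun _ : Unit => (1:ℝ))) = Sum.elim x (fun _ => 1) from rfl,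
      quadform] at this
    simp only [mul_one, one_pow] at this
    linarith
end

section
/- Let F₀ = [[F̂₀, f₀],[f₀ᵀ, d₀]] and F_i = [[F̂_i, 0],[0ᵀ, e_i]] (i = 1,...,N) be symmetric (p+1)×(p+1) matrices with F̂_i diagonal. Suppose for each i there exists ŝ_i ∈ ℝᵖ with ŝ_iᵀ F̂_i ŝ_i + e_i < 0, and the supports of the ŝ_i do not overlap. If there exists y = (v, 0) ∈ ℝ^{p+1} with vᵀ F̂₀ v < 0 and vᵀ F̂_i v ≤ 0 for all i, then there exists s ∈ ℝᵖ with sᵀ F̂₀ s + 2 f₀ᵀ s + d₀ < 0 and sᵀ F̂_i s + e_i ≤ 0 for all i. -/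
open Matrix

private lemma dot_symm' {p : ℕ} (M : Matrix (Fin p) (Fin p) ℝ) (hM : M.IsSymm)
    (x y : Fin p → ℝ) : x ⬝ᵥ M *ᵥ y = y ⬝ᵥ M *ᵥ x := by
  rw [dotProduct_mulVec, ← mulVec_transpose, hM, dotProduct_comm]

private lemma quad_neg' (a b c2 : ℝ) (ha : a < 0) :
    ∃ t : ℝ, 0 ≤ t ∧ t ^ 2 * a + t * b + c2 < 0 := by
  refine ⟨max 1 ((|b| + |c2| + 1) / (-a)), le_trans zero_le_one (le_max_left _ _), ?_⟩
  set t := max 1 ((|b| + |c2| + 1) / (-a)) with ht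
  have ht1 : 1 ≤ t := le_max_left _ _
  have ht2 : (|b| + |c2| + 1) / (-a) ≤ t := le_max_right _ _
  have h3 : |b| + |c2| + 1 ≤ t * (-a) := (div_le_iff₀ (by linarith)).mp ht2
  have hb1 : b ≤ |b| := le_abs_self b
  have hc1 : c2 ≤ |c2| := le_abs_self c2
  have hcn : 0 ≤ |c2| := abs_nonneg c2
  nlinarith [mul_le_mul_of_nonneg_left h3 (le_trans zero_le_one ht1)]

theorem stmt11 (p N : ℕ)
    (F0hat : Matrix (Fin p) (Fin p) ℝ) (Fhat : Fin N → Matrix (Fin p) (Fin p) ℝ)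
    (f0 : Fin p → ℝ) (d0 : ℝ) (e : Fin N → ℝ)
    (hF0 : F0hat.IsSymm) (hFdiag : ∀ i, (Fhat i).IsDiag)
    (B : Fin N → Set (Fin p))
    (hBdisj : ∀ i j, i ≠ j → Disjoint (B i) (B j))
    (shat : Fin N → Fin p → ℝ)
    (hsupp : ∀ i j, shat i j ≠ 0 → j ∈ B i)
    (hFblock : ∀ i j k, Fhat i j k ≠ 0 → j ∈ B i ∧ k ∈ B i)
    (hslater : ∀ i, shat i ⬝ᵥ (Fhat i) *ᵥ shat i + e i < 0)
    (v : Fin p → ℝ)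
    (hv0 : v ⬝ᵥ F0hat *ᵥ v < 0) (hvi : ∀ i, v ⬝ᵥ (Fhat i) *ᵥ v ≤ 0) :
    ∃ s : Fin p → ℝ, s ⬝ᵥ F0hat *ᵥ s + 2 * (f0 ⬝ᵥ s) + d0 < 0 ∧
      ∀ i, s ⬝ᵥ (Fhat i) *ᵥ s + e i ≤ 0 := by
  classical
  have hFsymm : ∀ i, (Fhat i).IsSymm := fun i => (hFdiag i).isSymm
  set c : Fin N → ℝ := fun i => v ⬝ᵥ (Fhat i) *ᵥ shat i with hc
  set ε : Fin N → ℝ := fun i => if c i ≤ 0 then 1 else -1 with hε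
  have hε_sq : ∀ i, ε i * ε i = 1 := by
    intro i; simp only [hε]; split <;> norm_num
  have hεc : ∀ i, ε i * c i ≤ 0 := by
    intro i; simp only [hε]; split
    · simpa using ‹c i ≤ 0›
    · nlinarith [not_le.mp ‹¬ c i ≤ 0›]
  set w : Fin p → ℝ := ∑ j, ε j • shat j with hw
  -- orthogonality
  have horth : ∀ i j : Fin N, j ≠ i → (Fhat i) *ᵥ shat j = 0 := by
    intro i j hji
    funext k
    show ∑ m, Fhat i k m * shat j m = 0
    refine Finset.sum_eq_zero fun m _ => ?_
    by_cases hF : Fhat i k m = 0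
    · simp [hF]
    by_cases hs : shat j m = 0
    · simp [hs]
    exact absurd ((hBdisj j i hji).ne_of_mem (hsupp j m hs) (hFblock i k m hF).2) (by simp)
  have hMw : ∀ i, (Fhat i) *ᵥ w = ε i • ((Fhat i) *ᵥ shat i) := by
    intro i
    have : (Fhat i) *ᵥ w = ∑ j, ε j • ((Fhat i) *ᵥ shat j) := by
      rw [hw]
      simp [← Matrix.mulVecLin_apply, map_sum, LinearMap.map_smul, -Matrix.mulVecBilin_apply]
    rw [this, Finset.sum_eq_single i]
    · intro j _ hji; rw [horth i j hji]; simp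
    · intro h; exact absurd (Finset.mem_univ i) h
  -- values of cross/quadratic terms for constraint matrices
  have hvw : ∀ i, v ⬝ᵥ (Fhat i) *ᵥ w = ε i * c i := by
    intro i; rw [hMw i, dotProduct_smul, smul_eq_mul]
  have hwv : ∀ i, w ⬝ᵥ (Fhat i) *ᵥ v = ε i * c i := by
    intro i; rw [dot_symm' _ (hFsymm i), hvw]
  have hww : ∀ i, w ⬝ᵥ (Fhat i) *ᵥ w = shat i ⬝ᵥ (Fhat i) *ᵥ shat i := by
    intro i
    rw [hMw i, dotProduct_smul, smul_eq_mul, dot_symm' _ (hFsymm i), hMw i,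
      dotProduct_smul, smul_eq_mul, ← mul_assoc, hε_sq, one_mul]
  have expand : ∀ (M : Matrix (Fin p) (Fin p) ℝ) (t : ℝ),
      (t • v + w) ⬝ᵥ M *ᵥ (t • v + w) =
        t ^ 2 * (v ⬝ᵥ M *ᵥ v) + t * (v ⬝ᵥ M *ᵥ w) + t * (w ⬝ᵥ M *ᵥ v) + w ⬝ᵥ M *ᵥ w := by
    intro M t
    rw [mulVec_add, mulVec_smul]
    simp only [dotProduct_add, add_dotProduct, dotProduct_smul, smul_dotProduct, smul_eq_mul]
    ring
  -- choose t for the objective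
  obtain ⟨t, ht0, ht⟩ := quad_neg' (v ⬝ᵥ F0hat *ᵥ v)
    (v ⬝ᵥ F0hat *ᵥ w + w ⬝ᵥ F0hat *ᵥ v + 2 * (f0 ⬝ᵥ v))
    (w ⬝ᵥ F0hat *ᵥ w + 2 * (f0 ⬝ᵥ w) + d0) hv0
  refine ⟨t • v + w, ?_, ?_⟩
  · have hf : f0 ⬝ᵥ (t • v + w) = t * (f0 ⬝ᵥ v) + f0 ⬝ᵥ w := by
      simp [dotProduct_add, dotProduct_smul, smul_eq_mul]
    rw [expand, hf]
    nlinarith [ht]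
  · intro i
    rw [expand, hvw, hwv]
    have h1 : t ^ 2 * (v ⬝ᵥ (Fhat i) *ᵥ v) ≤ 0 :=
      mul_nonpos_of_nonneg_of_nonpos (sq_nonneg t) (hvi i)
    have h2 : t * (ε i * c i) ≤ 0 := mul_nonpos_of_nonneg_of_nonpos ht0 (hεc i)
    have h3 := hslater i
    rw [hww]
    linarith
end
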